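/- Let $a \geq 2$ be an integer and $p, q \geq 0$ reals, not both zero. Set $s_m = \frac{6(2^a - 1)p - 3(2^a - 2)q}{2^a - 4^a + 8^a}$. Then, with $\bar h_1(b; p,q,s,a) = \frac{2^{-b}(2^a - 2^b)\left(6p + 3(2^{a+b} - 2)q - 2^a(2^a + 2^b)s\right)}{3\left(2^a(2p-3q+s) + 4^a(q+s) - 2p + 2q\right)}$, the identity $\bar h_1(0; p, q, s_m, a) = \bar h_1\!\left(a - \log_2(2^a - 1);\, p, q, s_m, a\right)$ holds; i.e., at $s = s_m$ the planted ranking with $2^a$ classes and the merged ranking with $2^a - 1$ classes have the same hierarchy estimate. -/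

import Mathlib

/-- First-order hierarchy estimate of the direct ranking of an RSBM with `2^a` equal
classes merged into `2^(a-b)` equal classes (real merging parameter `b`, linear penalty). -/
noncomputable def hbar1 (p q s : ℝ) (a : ℕ) (b : ℝ) : ℝ :=
  (2 : ℝ) ^ (-b) * ((2 : ℝ) ^ (a : ℝ) - (2 : ℝ) ^ b) *
      (6 * p + 3 * ((2 : ℝ) ^ ((a : ℝ) + b) - 2) * q -
        (2 : ℝ) ^ (a : ℝ) * ((2 : ℝ) ^ (a : ℝ) + (2 : ℝ) ^ b) * s) /
    (3 * ((2 : ℝ) ^ (a : ℝ) * (2 * p - 3 * q + s) + (4 : ℝ) ^ (a : ℝ) * (q + s)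
      - 2 * p + 2 * q))

/-- At the resolution threshold `s = s_m`, the planted ranking with `2^a` classes and
the merged ranking with `2^a - 1` classes have the same hierarchy estimate. -/
theorem stmt_9 (a : ℕ) (ha : 2 ≤ a) (p q : ℝ) (hp : 0 ≤ p) (hq : 0 ≤ q)
    (hpq : ¬(p = 0 ∧ q = 0)) :
    hbar1 p q ((6 * ((2 : ℝ) ^ a - 1) * p - 3 * ((2 : ℝ) ^ a - 2) * q) /
        ((2 : ℝ) ^ a - (4 : ℝ) ^ a + (8 : ℝ) ^ a)) a 0 =
      hbar1 p q ((6 * ((2 : ℝ) ^ a - 1) * p - 3 * ((2 : ℝ) ^ a - 2) * q) /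
        ((2 : ℝ) ^ a - (4 : ℝ) ^ a + (8 : ℝ) ^ a)) a
        ((a : ℝ) - Real.logb 2 ((2 : ℝ) ^ a - 1)) := by
  have ha4 : (4 : ℝ) ≤ (2 : ℝ) ^ a := by
    calc (4 : ℝ) = 2 ^ 2 := by norm_num
    _ ≤ 2 ^ a := pow_le_pow_right₀ (by norm_num) ha
  have h4 : ∀ n : ℕ, (4 : ℝ) ^ n = ((2:ℝ)^n)^2 := by
    intro n
    rw [← pow_mul, mul_comm, pow_mul]; norm_num
  have h8 : ∀ n : ℕ, (8 : ℝ) ^ n = ((2:ℝ)^n)^3 := by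
    intro n
    rw [← pow_mul, mul_comm, pow_mul]; norm_num
  set x : ℝ := (2 : ℝ) ^ a with hxdef
  have hx0 : (0 : ℝ) < x := by positivity
  have hx1 : (0 : ℝ) < x - 1 := by linarith
  have h2a : (2 : ℝ) ^ (a : ℝ) = x := by rw [Real.rpow_natCast]
  have h4a : (4 : ℝ) ^ (a : ℝ) = x ^ 2 := by rw [Real.rpow_natCast, h4]
  have hL : (2 : ℝ) ^ Real.logb 2 (x - 1) = x - 1 :=
    Real.rpow_logb (by norm_num) (by norm_num) (by linarith)
  have hb : (2 : ℝ) ^ ((a : ℝ) - Real.logb 2 (x - 1)) = x / (x - 1) := by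
    rw [Real.rpow_sub (by norm_num), h2a, hL]
  have hbneg : (2 : ℝ) ^ (-((a : ℝ) - Real.logb 2 (x - 1))) = (x - 1) / x := by
    rw [Real.rpow_neg (by norm_num), hb, inv_div]
  have hab : (2 : ℝ) ^ ((a : ℝ) + ((a : ℝ) - Real.logb 2 (x - 1))) = x * (x / (x - 1)) := by
    rw [Real.rpow_add (by norm_num), h2a, hb]
  have hd : x - x ^ 2 + x ^ 3 ≠ 0 := by nlinarith
  have hx1' : x - 1 ≠ 0 := ne_of_gt hx1
  have hx0' : x ≠ 0 := ne_of_gt hx0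
  unfold hbar1
  rw [h4 a, h8 a, ← hxdef]
  rw [neg_zero, Real.rpow_zero, add_zero, h2a, h4a, hb, hbneg, hab]
  congr 1
  have hd' : 1 - x + x ^ 2 ≠ 0 := by nlinarith
  field_simp
  ring
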